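/- Let p ∈ S_ℓ with k = ℓ−2, let n ≥ k, and H ⊆ {1,...,n} with |H| = k. Define the order graph G_n^H(p): a tournament on the non-hole positions I = [n]∖H, with I partitioned into intervals I₁,…,I_{k+1} by the holes, where for positions i < j with i ∈ I_a, j ∈ I_b, there is an edge i→j if p_a > p_{b+1} and an edge j→i if p_a < p_{b+1}. Then the following are equivalent: (1) s_n^H(p) = 1; (2) G_n^H(p) has no directed cycle; (3) G_n^H(p) has no directed cycle of length 3. -/

import Mathlib

open Finset

/-- The word `σ` contains the pattern `p`: there is a subsequence of `σ`
order-isomorphic to `p`. -/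
def ContainsPat {n ℓ : ℕ} {α β : Type*} [LinearOrder α] [LinearOrder β]
    (σ : Fin n → α) (p : Fin ℓ → β) : Prop :=
  ∃ g : Fin ℓ → Fin n, StrictMono g ∧ ∀ a b : Fin ℓ, σ (g a) < σ (g b) ↔ p a < p b

/-- `σ ∈ S_n` is an extension of the partial permutation `π`: on the non-hole
positions, the relative order of the values of `σ` matches that of `π`. -/
def IsExtension {n : ℕ} {α : Type*} [LinearOrder α]
    (σ : Equiv.Perm (Fin n)) (π : Fin n → Option α) : Prop :=
  ∀ i j : Fin n, ∀ vi vj : α, π i = some vi → π j = some vj → (σ i < σ j ↔ vi < vj)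

/-- The partial permutation `π` avoids the pattern `p`: every extension avoids `p`. -/
def PPAvoids {n ℓ : ℕ} {α β : Type*} [LinearOrder α] [LinearOrder β]
    (π : Fin n → Option α) (p : Fin ℓ → β) : Prop :=
  ∀ σ : Equiv.Perm (Fin n), IsExtension σ π → ¬ ContainsPat (⇑σ) p

/-- `π` is a partial permutation of length `n` with `k` holes: each value of
`{1,…,n-k}` appears exactly once and there are exactly `k` holes. -/
def IsPPerm {n : ℕ} (k : ℕ) (π : Fin n → Option (Fin (n - k))) : Prop :=
  (Finset.univ.filter fun i => π i = none).card = k ∧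
    ∀ v : Fin (n - k), ∃! i : Fin n, π i = some v

/-- `π` is a partial permutation whose holes are exactly at the positions in `H`. -/
def IsPPermH {n : ℕ} (H : Finset (Fin n)) (π : Fin n → Option (Fin (n - H.card))) : Prop :=
  (∀ i, π i = none ↔ i ∈ H) ∧ ∀ v : Fin (n - H.card), ∃! i : Fin n, π i = some v

/-- `s_n^k(p)`: the number of `p`-avoiding partial permutations of length `n`
with `k` holes. -/
noncomputable def snk (n k : ℕ) {ℓ : ℕ} (p : Fin ℓ → Fin ℓ) : ℕ :=
  Nat.card {π : Fin n → Option (Fin (n - k)) // IsPPerm k π ∧ PPAvoids π p}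

/-- `s_n^H(p)`: the number of `p`-avoiding partial permutations of length `n`
with hole set `H`. -/
noncomputable def snH {n ℓ : ℕ} (H : Finset (Fin n)) (p : Fin ℓ → Fin ℓ) : ℕ :=
  Nat.card {π : Fin n → Option (Fin (n - H.card)) // IsPPermH H π ∧ PPAvoids π p}

/-- The number of permutations of length `m` avoiding the pattern `p`. -/
noncomputable def avoidCount (m : ℕ) {ℓ : ℕ} (p : Fin ℓ → Fin ℓ) : ℕ :=
  Nat.card {σ : Equiv.Perm (Fin m) // ¬ ContainsPat (⇑σ) p}

/-- `p` is a Baxter permutation: no indices `a < b < c = b+1 < d` such that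
`(p a, p b, p c, p d)` is order-isomorphic to `2413` or `3142`. -/
def IsBaxter {ℓ : ℕ} (p : Fin ℓ → Fin ℓ) : Prop :=
  ¬ ∃ a b c d : Fin ℓ, a < b ∧ (b : ℕ) + 1 = (c : ℕ) ∧ c < d ∧
    ((p c < p a ∧ p a < p d ∧ p d < p b) ∨ (p b < p d ∧ p d < p a ∧ p a < p c))

section Aux

variable {n k : ℕ}

/-- Interval index of a position: number of holes strictly below it. -/
def hIdx (H : Finset (Fin n)) (i : Fin n) : ℕ := (H.filter (· < i)).card

lemma hIdx_le (H : Finset (Fin n)) (i : Fin n) : hIdx H i ≤ H.card :=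
  Finset.card_filter_le _ _

lemma hIdx_mono (H : Finset (Fin n)) {i j : Fin n} (hij : i ≤ j) :
    hIdx H i ≤ hIdx H j := by
  apply Finset.card_le_card
  intro x hx
  simp only [mem_filter] at hx ⊢
  exact ⟨hx.1, lt_of_lt_of_le hx.2 hij⟩

/-- Bundle of the hypotheses on the order graph. -/
structure OG (p : Fin (k + 2) → Fin (k + 2)) (H : Finset (Fin n))
    (fwd edge : Fin n → Fin n → Prop) : Prop where
  hp : Function.Bijective p
  hH : H.card = k
  hfwd : ∀ i j : Fin n, ∀ (h1 : hIdx H j + 1 < k + 2) (h2 : hIdx H i < k + 2),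
    (fwd i j ↔ p ⟨hIdx H j + 1, h1⟩ < p ⟨hIdx H i, h2⟩)
  hedge : ∀ u v : Fin n, edge u v ↔
    u ∉ H ∧ v ∉ H ∧ ((u < v ∧ fwd u v) ∨ (v < u ∧ ¬ fwd v u))

variable {p : Fin (k + 2) → Fin (k + 2)} {H : Finset (Fin n)}
  {fwd edge : Fin n → Fin n → Prop}

lemma OG.idx_lt (og : OG p H fwd edge) (i : Fin n) : hIdx H i < k + 2 := by
  have := hIdx_le H i; have := og.hH; omega
  
lemma OG.idx1_lt (og : OG p H fwd edge) (i : Fin n) : hIdx H i + 1 < k + 2 := by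
  have := hIdx_le H i; have := og.hH; omega

lemma OG.edge_irrefl (og : OG p H fwd edge) (u : Fin n) : ¬ edge u u := by
  rw [og.hedge]
  rintro ⟨-, -, ⟨h, -⟩ | ⟨h, -⟩⟩ <;> exact lt_irrefl _ h

lemma OG.edge_asymm (og : OG p H fwd edge) {u v : Fin n} (h : edge u v) : ¬ edge v u := by
  rw [og.hedge] at h ⊢
  obtain ⟨-, -, ⟨h1, h2⟩ | ⟨h1, h2⟩⟩ := h <;>
    rintro ⟨-, -, ⟨g1, g2⟩ | ⟨g1, g2⟩⟩ <;>
    first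
      | exact absurd h1 (not_lt.mpr g1.le)
      | exact absurd g1 (not_lt.mpr h1.le)
      | exact g2 h2
      | exact h2 g2

lemma OG.edge_total (og : OG p H fwd edge) {u v : Fin n} (huv : u ≠ v)
    (hu : u ∉ H) (hv : v ∉ H) : edge u v ∨ edge v u := by
  rw [og.hedge, og.hedge]
  rcases lt_or_gt_of_ne huv with h | h
  · by_cases hf : fwd u v
    · exact Or.inl ⟨hu, hv, Or.inl ⟨h, hf⟩⟩
    · exact Or.inr ⟨hv, hu, Or.inr ⟨h, hf⟩⟩
  · by_cases hf : fwd v u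
    · exact Or.inr ⟨hv, hu, Or.inl ⟨h, hf⟩⟩
    · exact Or.inl ⟨hu, hv, Or.inr ⟨h, hf⟩⟩

lemma OG.edge_nonhole (og : OG p H fwd edge) {u v : Fin n} (h : edge u v) :
    u ∉ H ∧ v ∉ H := by
  rw [og.hedge] at h; exact ⟨h.1, h.2.1⟩

lemma OG.edge_trans (og : OG p H fwd edge)
    (no3 : ¬ ∃ f : Fin 3 → Fin n, Function.Injective f ∧
      ∀ t : Fin 3, edge (f t) (f ⟨((t : ℕ) + 1) % 3, Nat.mod_lt _ (by norm_num)⟩))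
    {a b c : Fin n} (hab : edge a b) (hbc : edge b c) : edge a c := by
  by_contra hac
  have hab' := og.edge_nonhole hab
  have hbc' := og.edge_nonhole hbc
  have hne : c ≠ a := by rintro rfl; exact og.edge_asymm hab hbc
  have hca : edge c a := (og.edge_total hne hbc'.2 hab'.1).resolve_right hac
  apply no3
  have h1 : a ≠ b := by rintro rfl; exact og.edge_irrefl a hab
  have h2 : b ≠ c := by rintro rfl; exact og.edge_irrefl b hbc
  refine ⟨![a, b, c], ?_, ?_⟩
  · intro s t hst
    fin_cases s <;> fin_cases t <;> simp_all <;> omega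
  · intro t
    fin_cases t <;> simpa using (by assumption : _)

/-- The monotonicity condition on a partial permutation along the edges. -/
def Sat (edge : Fin n → Fin n → Prop) (π : Fin n → Option (Fin (n - H.card))) : Prop :=
  ∀ u v : Fin n, ∀ a b : Fin (n - H.card), edge u v → π u = some a → π v = some b → a < b

lemma lemA (og : OG p H fwd edge) {π : Fin n → Option (Fin (n - H.card))}
    (h1 : IsPPermH H π) (h2 : Sat edge π) : PPAvoids π p := by
  classical
  rintro σ hext ⟨g, hg, hgp⟩
  set S : Finset (Fin (k + 2)) := univ.filter (fun t => g t ∉ H) with hS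
  have hmemS : ∀ t, t ∈ S ↔ g t ∉ H := by intro t; simp [hS]
  have hginj := hg.injective
  have hNS : (univ.filter (fun t : Fin (k + 2) => g t ∈ H)).card ≤ k := by
    have hle : (univ.filter (fun t : Fin (k + 2) => g t ∈ H)).card ≤ H.card := by
      apply card_le_card_of_injOn g (fun t ht => (mem_filter.mp ht).2)
      exact fun a _ b _ h => hginj h
    exact og.hH ▸ hle
  have hsplit : (univ.filter (fun t : Fin (k + 2) => g t ∈ H)).card + S.card = k + 2 := by
    rw [hS]
    rw [Finset.card_filter_add_card_filter_not]
    simp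
  have hSne : S.Nonempty := card_pos.mp (by omega)
  set s0 := S.min' hSne with hs0
  set t1 := S.max' hSne with ht1
  have hs0S : s0 ∈ S := S.min'_mem hSne
  have ht1S : t1 ∈ S := S.max'_mem hSne
  -- lower bound at the minimum
  have hs0A : (s0 : ℕ) ≤ hIdx H (g s0) := by
    have hsub : (Finset.Iio s0).image g ⊆ H.filter (· < g s0) := by
      intro x hx
      simp only [mem_image, mem_Iio] at hx
      obtain ⟨u, hu, rfl⟩ := hx
      have hgu : g u ∈ H := by
        by_contra hc
        exact absurd (S.min'_le u ((hmemS u).mpr hc)) (not_le.mpr hu)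
      exact mem_filter.mpr ⟨hgu, hg hu⟩
    have hc := card_le_card hsub
    rwa [card_image_of_injective _ hginj, Fin.card_Iio] at hc
  -- upper bound at the maximum
  have ht1A : hIdx H (g t1) < (t1 : ℕ) := by
    have hsub : (H.filter (· < g t1)) ∪ (Finset.Ioi t1).image g ⊆ H := by
      intro x hx
      rcases mem_union.mp hx with hx | hx
      · exact (mem_filter.mp hx).1
      · simp only [mem_image, mem_Ioi] at hx
        obtain ⟨u, hu, rfl⟩ := hx
        by_contra hc
        exact absurd (S.le_max' u ((hmemS u).mpr hc)) (not_le.mpr hu)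
    have hdisj : Disjoint (H.filter (· < g t1)) ((Finset.Ioi t1).image g) := by
      rw [disjoint_left]
      intro x hx1 hx2
      simp only [mem_image, mem_Ioi] at hx2
      obtain ⟨u, hu, rfl⟩ := hx2
      exact absurd (mem_filter.mp hx1).2 (not_lt.mpr (hg hu).le)
    have hc := card_le_card hsub
    rw [card_union_of_disjoint hdisj, card_image_of_injective _ hginj,
      Fin.card_Ioi, og.hH] at hc
    have ht1lt : (t1 : ℕ) < k + 2 := t1.isLt
    have h2' : 2 ≤ S.card := by omega
    have ht1pos : 0 < (t1 : ℕ) := by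
      rcases Nat.eq_zero_or_pos (t1 : ℕ) with h0 | h
      · exfalso
        -- t1 is the max, so S ⊆ {t1}; but S has ≥ 2 elements
        have : S ⊆ {t1} := by
          intro x hx
          have := S.le_max' x hx
          rw [← ht1] at this
          have : (x : ℕ) ≤ (t1 : ℕ) := this
          simp only [mem_singleton]
          exact Fin.ext (by omega)
        have := card_le_card this
        simp at this
        omega
      · exact h
    have hlink : hIdx H (g t1) = (H.filter (· < g t1)).card := rfl
    omega
  -- the critical pair
  set T' := S.filter (fun t => hIdx H (g t) < (t : ℕ)) with hT'
  have hT'ne : T'.Nonempty := ⟨t1, mem_filter.mpr ⟨ht1S, ht1A⟩⟩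
  set t := T'.min' hT'ne with ht
  have htT' : t ∈ T' := T'.min'_mem hT'ne
  have htS : t ∈ S := (mem_filter.mp htT').1
  have htA : hIdx H (g t) < (t : ℕ) := (mem_filter.mp htT').2
  have hs0t : s0 < t := by
    rcases lt_or_eq_of_le (S.min'_le t htS) with h | h
    · rw [← hs0] at h; exact h
    · exfalso
      rw [← hs0] at h
      rw [← h] at htA
      omega
  set S2 := S.filter (· < t) with hS2
  have hS2ne : S2.Nonempty := ⟨s0, mem_filter.mpr ⟨hs0S, hs0t⟩⟩
  set s := S2.max' hS2ne with hsdef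
  have hsS2 : s ∈ S2 := S2.max'_mem hS2ne
  have hsS : s ∈ S := (mem_filter.mp hsS2).1
  have hst : s < t := (mem_filter.mp hsS2).2
  have hstn : (s : ℕ) < (t : ℕ) := hst
  have hsA : (s : ℕ) ≤ hIdx H (g s) := by
    by_contra hc
    push_neg at hc
    have hmem : s ∈ T' := mem_filter.mpr ⟨hsS, hc⟩
    exact absurd (T'.min'_le s hmem) (not_le.mpr hst)
  have hgap : ∀ u, s < u → u < t → g u ∈ H := by
    intro u hsu hut
    by_contra hc
    have hmem : u ∈ S2 := mem_filter.mpr ⟨(hmemS u).mpr hc, hut⟩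
    exact absurd (S2.le_max' u hmem) (not_le.mpr hsu)
  have hAt : hIdx H (g s) + ((t : ℕ) - (s : ℕ) - 1) ≤ hIdx H (g t) := by
    have hsub : (H.filter (· < g s)) ∪ (Finset.Ioo s t).image g ⊆ H.filter (· < g t) := by
      intro x hx
      rcases mem_union.mp hx with hx | hx
      · obtain ⟨hx1, hx2⟩ := mem_filter.mp hx
        exact mem_filter.mpr ⟨hx1, hx2.trans (hg hst)⟩
      · simp only [mem_image, mem_Ioo] at hx
        obtain ⟨u, ⟨hu1, hu2⟩, rfl⟩ := hx
        exact mem_filter.mpr ⟨hgap u hu1 hu2, hg hu2⟩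
    have hdisj : Disjoint (H.filter (· < g s)) ((Finset.Ioo s t).image g) := by
      rw [disjoint_left]
      intro x hx1 hx2
      simp only [mem_image, mem_Ioo] at hx2
      obtain ⟨u, ⟨hu1, hu2⟩, rfl⟩ := hx2
      exact absurd (mem_filter.mp hx1).2 (not_lt.mpr (hg hu1).le)
    have hc := card_le_card hsub
    rwa [card_union_of_disjoint hdisj, card_image_of_injective _ hginj,
      Fin.card_Ioo] at hc
  have hAle : hIdx H (g t) ≤ k := (hIdx_le H _).trans (le_of_eq og.hH)
  -- now hIdx H (g s) = s and hIdx H (g t) = t - 1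
  have hAs_eq : hIdx H (g s) = (s : ℕ) := by omega
  have hAt_eq : hIdx H (g t) + 1 = (t : ℕ) := by omega
  -- conclude
  have hu0 : g s ∉ H := (hmemS s).mp hsS
  have hv0 : g t ∉ H := (hmemS t).mp htS
  obtain ⟨a, ha⟩ : ∃ a, π (g s) = some a := by
    rcases h : π (g s) with _ | a
    · exact absurd ((h1.1 _).mp h) hu0
    · exact ⟨a, rfl⟩
  obtain ⟨b, hb⟩ : ∃ b, π (g t) = some b := by
    rcases h : π (g t) with _ | b
    · exact absurd ((h1.1 _).mp h) hv0
    · exact ⟨b, rfl⟩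
  have hne_t : (⟨hIdx H (g t) + 1, og.idx1_lt (g t)⟩ : Fin (k + 2)) = t := Fin.ext hAt_eq
  have hne_s : (⟨hIdx H (g s), og.idx_lt (g s)⟩ : Fin (k + 2)) = s := Fin.ext hAs_eq
  have hfwd_iff := og.hfwd (g s) (g t) (og.idx1_lt (g t)) (og.idx_lt (g s))
  rw [hne_t, hne_s] at hfwd_iff
  by_cases hf : fwd (g s) (g t)
  · have he : edge (g s) (g t) := (og.hedge _ _).mpr ⟨hu0, hv0, Or.inl ⟨hg hst, hf⟩⟩
    have hab := h2 _ _ _ _ he ha hb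
    have hσ : σ (g s) < σ (g t) := (hext _ _ _ _ ha hb).mpr hab
    have hps : p s < p t := (hgp s t).mp hσ
    have hpt : p t < p s := hfwd_iff.mp hf
    exact absurd hps (lt_asymm hpt)
  · have he : edge (g t) (g s) := (og.hedge _ _).mpr ⟨hv0, hu0, Or.inr ⟨hg hst, hf⟩⟩
    have hba := h2 _ _ _ _ he hb ha
    have hσ : σ (g t) < σ (g s) := (hext _ _ _ _ hb ha).mpr hba
    have hpt : p t < p s := (hgp t s).mp hσ
    exact (hfwd_iff.not.mp hf) hpt

lemma lemB (og : OG p H fwd edge) {π : Fin n → Option (Fin (n - H.card))}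
    (h1 : IsPPermH H π) (h2 : PPAvoids π p) : Sat edge π := by
  classical
  intro u v a b he ha hb
  by_contra hab
  have hne : a ≠ b := by
    rintro rfl
    obtain ⟨x, -, hx⟩ := h1.2 a
    have huv : u = v := (hx u ha).trans (hx v hb).symm
    rw [huv] at he
    exact og.edge_irrefl v he
  have hba : b < a := lt_of_le_of_ne (not_lt.mp hab) hne.symm
  rw [og.hedge] at he
  obtain ⟨huH, hvH, hcase⟩ := he
  obtain ⟨u0, v0, a0, b0, hu0H, hv0H, hu0v0, ha0, hb0, hkey⟩ :
      ∃ u0 v0 : Fin n, ∃ a0 b0 : Fin (n - H.card),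
        u0 ∉ H ∧ v0 ∉ H ∧ u0 < v0 ∧ π u0 = some a0 ∧ π v0 = some b0 ∧
        ((a0 < b0 ∧ p ⟨hIdx H u0, og.idx_lt u0⟩ < p ⟨hIdx H v0 + 1, og.idx1_lt v0⟩) ∨
         (b0 < a0 ∧ p ⟨hIdx H v0 + 1, og.idx1_lt v0⟩ < p ⟨hIdx H u0, og.idx_lt u0⟩)) := by
    rcases hcase with ⟨huv, hf⟩ | ⟨hvu, hf⟩
    · refine ⟨u, v, a, b, huH, hvH, huv, ha, hb, Or.inr ⟨hba, ?_⟩⟩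
      exact (og.hfwd u v (og.idx1_lt v) (og.idx_lt u)).mp hf
    · refine ⟨v, u, b, a, hvH, huH, hvu, hb, ha, Or.inl ⟨hba, ?_⟩⟩
      have hne_idx : (⟨hIdx H v, og.idx_lt v⟩ : Fin (k + 2)) ≠ ⟨hIdx H u + 1, og.idx1_lt u⟩ := by
        intro hcon
        have := congrArg Fin.val hcon
        simp only at this
        have hmono := hIdx_mono H (le_of_lt hvu)
        omega
      have hppne : p ⟨hIdx H v, og.idx_lt v⟩ ≠ p ⟨hIdx H u + 1, og.idx1_lt u⟩ :=
        fun hcon => hne_idx (og.hp.injective hcon)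
      have hnot := fun hlt => hf ((og.hfwd v u (og.idx1_lt u) (og.idx_lt v)).mpr hlt)
      rcases lt_or_gt_of_ne hppne with h' | h'
      · exact h'
      · exact absurd h' hnot
  clear hcase hab hne hba ha hb huH hvH
  -- the construction of an extension realizing the pattern
  have hNpos : 0 < n - H.card := by
    have hss : H ⊂ univ := ⟨subset_univ H, fun hsub => hu0H (hsub (mem_univ u0))⟩
    have hlt := card_lt_card hss
    rw [card_univ, Fintype.card_fin] at hlt
    omega
  have hu0v0ne : u0 ≠ v0 := ne_of_lt hu0v0
  set T : Finset (Fin n) := insert u0 (insert v0 H) with hT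
  have hu0T : u0 ∈ T := mem_insert_self _ _
  have hv0T : v0 ∈ T := mem_insert_of_mem (mem_insert_self _ _)
  have hTcard : T.card = k + 2 := by
    rw [hT, card_insert_of_notMem (by simp [hu0v0ne, hu0H]),
      card_insert_of_notMem hv0H, og.hH]
  set α : Fin (k + 2) := ⟨hIdx H u0, og.idx_lt u0⟩ with hα
  set β : Fin (k + 2) := ⟨hIdx H v0 + 1, og.idx1_lt v0⟩ with hβ
  set A' : ℚ := ((a0 : ℕ) : ℚ) with hA'
  set B' : ℚ := ((b0 : ℕ) : ℚ) with hB'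
  set pq : Fin (k + 2) → ℚ := fun w => ((p w : ℕ) : ℚ) with hpq
  have hcast : ∀ x y : Fin (k + 2), pq x < pq y ↔ p x < p y := by
    intro x y
    rw [hpq]
    simp only [Nat.cast_lt]
    exact Fin.val_fin_lt
  have hcastN : ∀ x y : Fin (n - H.card), (((x : ℕ) : ℚ) < ((y : ℕ) : ℚ)) ↔ x < y := by
    intro x y
    simp only [Nat.cast_lt]
    exact Fin.val_fin_lt
  set c : ℚ := (B' - A') / (pq β - pq α) with hc
  have hcpos : 0 < c := by
    rw [hc, div_pos_iff]
    rcases hkey with ⟨hv', hp'⟩ | ⟨hv', hp'⟩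
    · left
      constructor
      · rw [sub_pos]; exact (hcastN a0 b0).mpr hv'
      · rw [sub_pos]; exact (hcast α β).mpr hp'
    · right
      constructor
      · rw [sub_neg]; exact (hcastN b0 a0).mpr hv'
      · rw [sub_neg]; exact (hcast β α).mpr hp'
  have hdenne : pq β - pq α ≠ 0 := by
    rcases hkey with ⟨-, hp'⟩ | ⟨-, hp'⟩
    · exact ne_of_gt (sub_pos.mpr ((hcast α β).mpr hp'))
    · exact ne_of_lt (sub_neg.mpr ((hcast β α).mpr hp'))
  set φ : ℚ → ℚ := fun x => A' + c * (x - pq α) with hφ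
  have hφmono : StrictMono φ := by
    intro x y hxy
    simp only [hφ]
    exact (add_lt_add_iff_left _).mpr (mul_lt_mul_of_pos_left (sub_lt_sub_right hxy _) hcpos)
  have hφα : φ (pq α) = A' := by simp [hφ]
  have hφβ : φ (pq β) = B' := by
    simp only [hφ, hc]
    field_simp
    ring
  have hTidx_lt : ∀ i ∈ T, (T.filter (· < i)).card < k + 2 := by
    intro i hi
    have hsub : T.filter (· < i) ⊆ T.erase i := by
      intro x hx
      obtain ⟨h1', h2'⟩ := mem_filter.mp hx
      exact mem_erase.mpr ⟨ne_of_lt h2', h1'⟩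
    have hle := card_le_card hsub
    rw [card_erase_of_mem hi, hTcard] at hle
    omega
  set val : Fin n → ℚ := fun i =>
    if h : i ∈ H then
      φ (pq ⟨(T.filter (· < i)).card,
        hTidx_lt i (mem_insert_of_mem (mem_insert_of_mem h))⟩)
    else (((π i).getD ⟨0, hNpos⟩ : Fin (n - H.card)) : ℕ) with hval
  -- the permutation induced by val (with ties broken by position)
  set f : Fin n → Lex (ℚ × Fin n) := fun i => toLex (val i, i) with hf
  have finj : Function.Injective f := by
    intro i j hij
    have := congrArg (fun x => (ofLex x).2) hij
    exact this
  set sfin : Finset (Lex (ℚ × Fin n)) := univ.image f with hsfin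
  have hscard : sfin.card = n := by
    rw [hsfin, card_image_of_injective _ finj, card_univ, Fintype.card_fin]
  set e := sfin.orderIsoOfFin hscard with he
  set σfun : Fin n → Fin n := fun i => e.symm ⟨f i, mem_image_of_mem f (mem_univ i)⟩
    with hσfun
  have hσlt' : ∀ i j, σfun i < σfun j ↔ f i < f j := by
    intro i j
    rw [hσfun]
    simp only
    rw [e.symm.lt_iff_lt, Subtype.mk_lt_mk]
  have hσinj : Function.Injective σfun := by
    intro i j hij
    rw [hσfun] at hij
    simp only at hij
    have := e.symm.injective hij
    exact finj (Subtype.mk_eq_mk.mp this)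
  set σ : Equiv.Perm (Fin n) :=
    Equiv.ofBijective σfun (Finite.injective_iff_bijective.mp hσinj) with hσ
  have hσlt : ∀ i j, σ i < σ j ↔ f i < f j := by
    intro i j
    rw [hσ, Equiv.ofBijective_apply, Equiv.ofBijective_apply]
    exact hσlt' i j
  -- σ is an extension of π
  have hext : IsExtension σ π := by
    intro i j vi vj hi hj
    have hiH : i ∉ H := fun h => by
      rw [(h1.1 i).mpr h] at hi; cases hi
    have hjH : j ∉ H := fun h => by
      rw [(h1.1 j).mpr h] at hj; cases hj
    have hvali : val i = ((vi : ℕ) : ℚ) := by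
      rw [hval]; simp only [dif_neg hiH, hi, Option.getD_some]
    have hvalj : val j = ((vj : ℕ) : ℚ) := by
      rw [hval]; simp only [dif_neg hjH, hj, Option.getD_some]
    rw [hσlt, hf]
    simp only
    rw [Prod.Lex.lt_iff]
    constructor
    · rintro (hlt | ⟨heq, hlt⟩)
      · rw [hvali, hvalj] at hlt
        exact (hcastN vi vj).mp hlt
      · rw [hvali, hvalj] at heq
        have hvij : vi = vj := by
          have : (vi : ℕ) = (vj : ℕ) := Nat.cast_injective heq
          exact Fin.ext this
        obtain ⟨x, -, hx⟩ := h1.2 vi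
        have hij : i = j := (hx i hi).trans (hx j (by rw [hvij]; exact hj)).symm
        rw [hij] at hlt
        exact absurd hlt (lt_irrefl _)
    · intro hvij
      left
      rw [hvali, hvalj]
      exact (hcastN vi vj).mpr hvij
  -- the pattern occurrence
  set g : Fin (k + 2) → Fin n := fun w => T.orderEmbOfFin hTcard w with hg
  have hgmono : StrictMono g := (T.orderEmbOfFin hTcard).strictMono
  have hgmem : ∀ w, g w ∈ T := fun w => Finset.orderEmbOfFin_mem T hTcard w
  have hidx : ∀ w : Fin (k + 2), (T.filter (· < g w)).card = (w : ℕ) := by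
    intro w
    have himg : T.filter (· < g w) = (Finset.Iio w).image g := by
      ext x
      simp only [mem_filter, mem_image, mem_Iio]
      constructor
      · rintro ⟨hxT, hlt⟩
        have hxr : x ∈ Set.range (T.orderEmbOfFin hTcard) := by
          rw [Finset.range_orderEmbOfFin]; exact hxT
        obtain ⟨b', rfl⟩ := hxr
        exact ⟨b', hgmono.lt_iff_lt.mp hlt, rfl⟩
      · rintro ⟨b', hb', rfl⟩
        exact ⟨hgmem b', hgmono hb'⟩
    rw [himg, card_image_of_injective _ hgmono.injective, Fin.card_Iio]
  have hidxu : (T.filter (· < u0)).card = hIdx H u0 := by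
    have : T.filter (· < u0) = H.filter (· < u0) := by
      ext x
      simp only [hT, mem_filter, mem_insert]
      constructor
      · rintro ⟨(rfl | rfl | hx), hlt⟩
        · exact absurd hlt (lt_irrefl _)
        · exact absurd (hlt.trans hu0v0) (lt_irrefl _)
        · exact ⟨hx, hlt⟩
      · rintro ⟨hx, hlt⟩
        exact ⟨Or.inr (Or.inr hx), hlt⟩
    rw [this]; rfl
  have hidxv : (T.filter (· < v0)).card = hIdx H v0 + 1 := by
    have hsp : T.filter (· < v0) = insert u0 (H.filter (· < v0)) := by
      ext x
      simp only [hT, mem_filter, mem_insert]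
      constructor
      · rintro ⟨(rfl | rfl | hx), hlt⟩
        · exact Or.inl rfl
        · exact absurd hlt (lt_irrefl _)
        · exact Or.inr ⟨hx, hlt⟩
      · rintro (rfl | ⟨hx, hlt⟩)
        · exact ⟨Or.inl rfl, hu0v0⟩
        · exact ⟨Or.inr (Or.inr hx), hlt⟩
    rw [hsp, card_insert_of_notMem (fun hmem => hu0H (mem_filter.mp hmem).1)]
    rfl
  have hgα : g α = u0 := by
    have hxr : u0 ∈ Set.range (T.orderEmbOfFin hTcard) := by
      rw [Finset.range_orderEmbOfFin]; exact hu0T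
    obtain ⟨w, hw⟩ := hxr
    have hwα : w = α := by
      apply Fin.ext
      have h' := hidx w
      rw [show g w = u0 from hw] at h'
      rw [← h', hidxu]
    rw [← hwα]; exact hw
  have hgβ : g β = v0 := by
    have hxr : v0 ∈ Set.range (T.orderEmbOfFin hTcard) := by
      rw [Finset.range_orderEmbOfFin]; exact hv0T
    obtain ⟨w, hw⟩ := hxr
    have hwβ : w = β := by
      apply Fin.ext
      have h' := hidx w
      rw [show g w = v0 from hw] at h'
      rw [← h', hidxv]
    rw [← hwβ]; exact hw
  have hvalg : ∀ w : Fin (k + 2), val (g w) = φ (pq w) := by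
    intro w
    by_cases hw : g w ∈ H
    · rw [hval]
      simp only [dif_pos hw]
      congr 2
      exact Fin.ext (hidx w)
    · rcases mem_insert.mp (hgmem w) with h' | h'
      · -- g w = u0, w = α
        have hwα : w = α := by
          apply Fin.ext
          have hh := hidx w
          rw [h', hidxu] at hh
          exact hh.symm
        rw [hwα, hgα, hval]
        simp only [dif_neg hu0H, ha0, Option.getD_some]
        rw [hφα]
      · rcases mem_insert.mp h' with h'' | h''
        · have hwβ : w = β := by
            apply Fin.ext
            have hh := hidx w
            rw [h'', hidxv] at hh
            exact hh.symm
          rw [hwβ, hgβ, hval]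
          simp only [dif_neg hv0H, hb0, Option.getD_some]
          rw [hφβ]
        · exact absurd h'' hw
  have hcontains : ContainsPat (⇑σ) p := by
    refine ⟨g, hgmono, ?_⟩
    intro x y
    rw [hσlt, hf]
    simp only
    rw [Prod.Lex.lt_iff]
    constructor
    · rintro (hlt | ⟨heq, hlt⟩)
      · rw [hvalg x, hvalg y] at hlt
        exact (hcast x y).mp (hφmono.lt_iff_lt.mp hlt)
      · rw [hvalg x, hvalg y] at heq
        have hpq_eq : pq x = pq y := hφmono.injective heq
        have hpxy : p x = p y := by
          rw [hpq] at hpq_eq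
          simp only [Nat.cast_inj] at hpq_eq
          exact Fin.ext hpq_eq
        have hxy : x = y := og.hp.injective hpxy
        rw [hxy] at hlt
        exact absurd hlt (lt_irrefl _)
    · intro hpxy
      left
      rw [hvalg x, hvalg y]
      exact hφmono ((hcast x y).mpr hpxy)
  exact h2 σ hext hcontains

lemma lemD (og : OG p H fwd edge)
    (no3 : ¬ ∃ f : Fin 3 → Fin n, Function.Injective f ∧
      ∀ t : Fin 3, edge (f t) (f ⟨((t : ℕ) + 1) % 3, Nat.mod_lt _ (by norm_num)⟩)) :
    snH H p = 1 := by
  classical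
  have htrans : ∀ {a b c : Fin n}, edge a b → edge b c → edge a c :=
    fun hab hbc => og.edge_trans no3 hab hbc
  set N := n - H.card with hN
  set I : Finset (Fin n) := Finset.univ \ H with hI
  have hImem : ∀ i : Fin n, i ∈ I ↔ i ∉ H := by intro i; simp [hI]
  have hIcard : I.card = N := by
    rw [hI, card_sdiff_of_subset (subset_univ H), card_univ, Fintype.card_fin]
  set rank : Fin n → ℕ := fun i => (I.filter (fun j => edge j i)).card with hrank
  have hrank_lt : ∀ i ∉ H, rank i < N := by
    intro i hi
    have hsub : I.filter (fun j => edge j i) ⊆ I.erase i := by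
      intro j hj
      simp only [mem_filter] at hj
      refine mem_erase.mpr ⟨?_, hj.1⟩
      rintro rfl; exact og.edge_irrefl _ hj.2
    have h1 := card_le_card hsub
    rw [card_erase_of_mem ((hImem i).mpr hi)] at h1
    have hpos : 0 < I.card := card_pos.mpr ⟨i, (hImem i).mpr hi⟩
    have h2 : rank i = (I.filter (fun j => edge j i)).card := rfl
    omega
  have hrank_mono : ∀ {i j : Fin n}, edge i j → rank i < rank j := by
    intro i j hij
    have hne := og.edge_nonhole hij
    apply card_lt_card
    rw [Finset.ssubset_iff_of_subset]
    · refine ⟨i, ?_, ?_⟩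
      · exact mem_filter.mpr ⟨(hImem i).mpr hne.1, hij⟩
      · intro hmem
        exact og.edge_irrefl i (mem_filter.mp hmem).2
    · intro x hx
      simp only [mem_filter] at hx ⊢
      exact ⟨hx.1, htrans hx.2 hij⟩
  have hrank_inj : ∀ i ∉ H, ∀ j ∉ H, rank i = rank j → i = j := by
    intro i hi j hj hrij
    by_contra hne
    rcases og.edge_total hne hi hj with h | h
    · exact absurd hrij (Nat.ne_of_lt (hrank_mono h))
    · exact absurd hrij.symm (Nat.ne_of_lt (hrank_mono h))
  set π : Fin n → Option (Fin N) :=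
    fun i => if h : i ∈ H then none else some ⟨rank i, hrank_lt i h⟩ with hπdef
  have hπnone : ∀ i, π i = none ↔ i ∈ H := by
    intro i
    by_cases h : i ∈ H <;> simp [hπdef, h]
  have hπsome : ∀ i (h : i ∉ H), π i = some ⟨rank i, hrank_lt i h⟩ := by
    intro i h; simp [hπdef, h]
  -- surjectivity of rank onto range N
  have hsurj : ∀ v : Fin N, ∃ i ∉ H, rank i = (v : ℕ) := by
    intro v
    have himg : I.image rank = Finset.range N := by
      apply Finset.eq_of_subset_of_card_le
      · intro x hx
        simp only [mem_image] at hx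
        obtain ⟨i, hi, rfl⟩ := hx
        exact Finset.mem_range.mpr (hrank_lt i ((hImem i).mp hi))
      · rw [Finset.card_range, ← hIcard]
        apply Finset.card_le_card_of_injOn rank (fun a ha => by
          exact mem_image_of_mem rank ha)
        intro a ha b hb hab
        exact hrank_inj a ((hImem a).mp ha) b ((hImem b).mp hb) hab
    have : (v : ℕ) ∈ I.image rank := by
      rw [himg]; exact Finset.mem_range.mpr v.isLt
    simp only [mem_image] at this
    obtain ⟨i, hi, hri⟩ := this
    exact ⟨i, (hImem i).mp hi, hri⟩
  have hperm : IsPPermH H π := by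
    refine ⟨hπnone, ?_⟩
    intro v
    obtain ⟨i, hi, hri⟩ := hsurj v
    refine ⟨i, ?_, ?_⟩
    · show π i = some v
      rw [hπsome i hi]
      exact congrArg some (Fin.ext hri)
    · intro j hj
      have hjH : j ∉ H := by
        intro hjH
        rw [(hπnone j).mpr hjH] at hj
        cases hj
      rw [hπsome j hjH] at hj
      have : rank j = (v : ℕ) := congrArg Fin.val (Option.some_injective _ hj)
      exact hrank_inj j hjH i hi (this.trans hri.symm)
  have hsat : Sat edge π := by
    intro u v a b he ha hb
    have hu := (og.edge_nonhole he).1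
    have hv := (og.edge_nonhole he).2
    rw [hπsome u hu] at ha
    rw [hπsome v hv] at hb
    have ha' := Option.some_injective _ ha
    have hb' := Option.some_injective _ hb
    rw [← ha', ← hb']
    exact hrank_mono he
  have havoid : PPAvoids π p := lemA og hperm hsat
  -- uniqueness
  have huniq : ∀ π' : Fin n → Option (Fin N),
      IsPPermH H π' → PPAvoids π' p → π' = π := by
    intro π' hperm' hav'
    have hsat' := lemB og hperm' hav'
    funext i
    by_cases hi : i ∈ H
    · rw [(hperm'.1 i).mpr hi, (hπnone i).mpr hi]
    · have hNpos : 0 < N := by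
        have := hrank_lt i hi; omega
      obtain ⟨vi, hvi⟩ : ∃ vi, π' i = some vi := by
        rcases h : π' i with _ | a
        · exact absurd ((hperm'.1 i).mp h) hi
        · exact ⟨a, rfl⟩
      -- value function for π'
      set w : Fin n → Fin N := fun j => (π' j).getD ⟨0, hNpos⟩ with hw
      have hwj : ∀ j ∉ H, π' j = some (w j) := by
        intro j hj
        rcases h : π' j with _ | a
        · exact absurd ((hperm'.1 j).mp h) hj
        · rw [hw]; simp [h]
      have hwinj : ∀ a ∉ H, ∀ b ∉ H, w a = w b → a = b := by
        intro a ha b hb hab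
        have h1 := hwj a ha
        have h2 := hwj b hb
        rw [hab] at h1
        obtain ⟨x, -, hx⟩ := hperm'.2 (w b)
        exact (hx a h1).trans (hx b h2).symm
      -- (w i : ℕ) = rank i
      have hcard : (I.filter (fun j => edge j i)).card
          = (Finset.univ.filter (fun x : Fin N => x < w i)).card := by
        apply Finset.card_nbij w
        · intro a ha
          simp only [mem_filter, mem_coe] at ha ⊢
          refine ⟨mem_univ _, ?_⟩
          have haH := (hImem a).mp ha.1
          exact hsat' a i (w a) (w i) ha.2 (hwj a haH) (hwj i hi)
        · intro a ha b hb hab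
          simp only [coe_filter, Set.mem_setOf_eq] at ha hb
          exact hwinj a ((hImem a).mp ha.1) b ((hImem b).mp hb.1) hab
        · intro x hx
          simp only [coe_filter, Set.mem_setOf_eq, Set.mem_image] at hx ⊢
          obtain ⟨j, hj0, -⟩ := hperm'.2 x
          have hj : π' j = some x := hj0
          have hjH : j ∉ H := by
            intro hjH
            rw [(hperm'.1 j).mpr hjH] at hj
            cases hj
          have hwjx : w j = x := by
            have := hwj j hjH
            rw [hj] at this
            exact (Option.some_injective _ this).symm
          have hji : j ≠ i := by
            rintro rfl
            rw [hwjx] at hx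
            exact lt_irrefl _ hx.2
          have hedgeji : edge j i := by
            rcases og.edge_total hji hjH hi with h | h
            · exact h
            · exfalso
              have := hsat' i j (w i) (w j) h (hwj i hi) (hwj j hjH)
              rw [hwjx] at this
              exact absurd hx.2 (not_lt.mpr this.le)
          exact ⟨j, ⟨(hImem j).mpr hjH, hedgeji⟩, hwjx⟩
      have hcard2 : (Finset.univ.filter (fun x : Fin N => x < w i)).card = (w i : ℕ) := by
        rw [show Finset.univ.filter (fun x : Fin N => x < w i) = Finset.Iio (w i) by
          ext x; simp]
        exact Fin.card_Iio _
      have hwi : (w i : ℕ) = rank i := by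
        have hr : rank i = (I.filter (fun j => edge j i)).card := rfl
        rw [hr, hcard, hcard2]
      rw [hwj i hi, hπsome i hi]
      exact congrArg some (Fin.ext hwi)
  -- conclude
  unfold snH
  rw [Nat.card_eq_one_iff_unique]
  constructor
  · constructor
    rintro ⟨x, hx1, hx2⟩ ⟨y, hy1, hy2⟩
    have := (huniq x hx1 hx2).trans (huniq y hy1 hy2).symm
    exact Subtype.ext this
  · exact ⟨⟨π, hperm, havoid⟩⟩

lemma lemE (og : OG p H fwd edge) {m : ℕ} (hm : 0 < m)
    (hc : ∃ f : Fin m → Fin n, Function.Injective f ∧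
      ∀ t : Fin m, edge (f t) (f ⟨((t : ℕ) + 1) % m, Nat.mod_lt _ hm⟩)) :
    snH H p = 0 := by
  obtain ⟨f, hf, hfe⟩ := hc
  have : IsEmpty {π : Fin n → Option (Fin (n - H.card)) // IsPPermH H π ∧ PPAvoids π p} := by
    constructor
    rintro ⟨π, hπ, hav⟩
    have hsat := lemB og hπ hav
    have hval : ∀ t : Fin m, ∃ a, π (f t) = some a := by
      intro t
      have hnh := (og.edge_nonhole (hfe t)).1
      rcases h : π (f t) with _ | a
      · exact absurd ((hπ.1 _).mp h) hnh
      · exact ⟨a, rfl⟩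
    choose v hv using hval
    obtain ⟨t0, -, ht0⟩ := Finset.exists_max_image Finset.univ v ⟨⟨0, hm⟩, mem_univ _⟩
    have hlt := hsat _ _ _ _ (hfe t0) (hv t0) (hv _)
    exact absurd (ht0 _ (mem_univ _)) (not_le.mpr hlt)
  unfold snH
  exact Nat.card_of_isEmpty

end Aux

/-- For a pattern `p` of length `k+2` and hole set `H` of size `k`, with the
order graph `G_n^H(p)` (a tournament on the non-hole positions), the following
are equivalent: `s_n^H(p) = 1`; the order graph has no directed cycle; the
order graph has no directed cycle of length 3. -/
theorem order_graph_characterization (n k : ℕ) (p : Fin (k + 2) → Fin (k + 2))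
    (hp : Function.Bijective p) (hkn : k ≤ n)
    (H : Finset (Fin n)) (hH : H.card = k)
    (fwd : Fin n → Fin n → Prop)
    (hfwd : ∀ i j : Fin n, fwd i j ↔
      p ⟨(H.filter (· < j)).card + 1, by
          have := Finset.card_filter_le H (· < j); omega⟩
        < p ⟨(H.filter (· < i)).card, by
          have := Finset.card_filter_le H (· < i); omega⟩)
    (edge : Fin n → Fin n → Prop)
    (hedge : ∀ u v : Fin n, edge u v ↔
      u ∉ H ∧ v ∉ H ∧ ((u < v ∧ fwd u v) ∨ (v < u ∧ ¬ fwd v u)))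
    (hasCycle : ℕ → Prop)
    (hcyc : ∀ (m : ℕ) (hm : 0 < m), hasCycle m ↔
      ∃ f : Fin m → Fin n, Function.Injective f ∧
        ∀ t : Fin m, edge (f t) (f ⟨((t : ℕ) + 1) % m, Nat.mod_lt _ hm⟩)) :
    (snH H p = 1 ↔ ¬ ∃ m, 0 < m ∧ hasCycle m) ∧
    ((¬ ∃ m, 0 < m ∧ hasCycle m) ↔ ¬ hasCycle 3) := by
  have og : OG p H fwd edge :=
    ⟨hp, hH, fun i j h1 h2 => hfwd i j, hedge⟩
  have h3 : hasCycle 3 ↔ ∃ f : Fin 3 → Fin n, Function.Injective f ∧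
      ∀ t : Fin 3, edge (f t) (f ⟨((t : ℕ) + 1) % 3, Nat.mod_lt _ (by norm_num)⟩) :=
    hcyc 3 (by norm_num)
  -- second equivalence
  have P2 : (¬ ∃ m, 0 < m ∧ hasCycle m) ↔ ¬ hasCycle 3 := by
    constructor
    · intro h hc3; exact h ⟨3, by norm_num, hc3⟩
    · rintro h ⟨m, hm, hcm⟩
      rw [hcyc m hm] at hcm
      obtain ⟨f, hf, hfe⟩ := hcm
      rw [h3] at h
      have tr : ∀ {a b c : Fin n}, edge a b → edge b c → edge a c := fun hab hbc => og.edge_trans h hab hbc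
      -- chain: edge (f 0) (f t) for 1 ≤ t ≤ m-1, then contradiction
      rcases eq_or_lt_of_le (show 1 ≤ m from hm) with hm1 | hm2
      · -- m = 1
        have h0 := hfe ⟨0, hm⟩
        have e : (⟨(0 + 1) % m, Nat.mod_lt _ hm⟩ : Fin m) = ⟨0, hm⟩ :=
          Fin.ext (by simp; omega)
        rw [e] at h0
        exact og.edge_irrefl _ h0
      · -- m ≥ 2
        have key : ∀ t : ℕ, 1 ≤ t → ∀ ht : t < m, edge (f ⟨0, hm⟩) (f ⟨t, ht⟩) := by
          intro t
          induction t with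
          | zero => omega
          | succ s ih =>
            intro _ ht
            have e : (⟨((s : ℕ) + 1) % m, Nat.mod_lt _ hm⟩ : Fin m) = ⟨s + 1, ht⟩ :=
              Fin.ext (by simpa using Nat.mod_eq_of_lt ht)
            rcases Nat.eq_zero_or_pos s with rfl | hs
            · have h0 := hfe ⟨0, hm⟩
              rwa [e] at h0
            · have h1 := ih hs (by omega)
              have h2 := hfe ⟨s, by omega⟩
              rw [show ((⟨s, by omega⟩ : Fin m) : ℕ) = s from rfl] at h2
              rw [e] at h2
              exact tr h1 h2
        have hlast := hfe ⟨m - 1, by omega⟩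
        have e : (⟨((m - 1 : ℕ) + 1) % m, Nat.mod_lt _ hm⟩ : Fin m) = ⟨0, hm⟩ :=
          Fin.ext (by show (m - 1 + 1) % m = 0
                      rw [show m - 1 + 1 = m by omega, Nat.mod_self])
        rw [e] at hlast
        exact og.edge_asymm (key (m - 1) (by omega) (by omega)) hlast
  refine ⟨?_, P2⟩
  constructor
  · intro hs
    rw [P2, h3]
    intro hc3
    have := lemE og (m := 3) (by norm_num) hc3
    omega
  · intro h
    rw [P2, h3] at h
    exact lemD og h
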